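/- arXiv:1911.12564 — 2 statements merged into one kernel-verified Lean document; each statement's English description precedes it below -/
import Mathlib

section
/- For the single-particle duality function D(x,η) = η(x)/α_x, the generator duality relation holds: applying the random walk generator A^α in the x-variable equals applying the partial exclusion generator L^α in the η-variable, i.e. for every site x and every configuration η with 0 ≤ η(y) ≤ α_y for all y, one has ∑_{y: |y−x|=1} α_y (η(y)/α_y − η(x)/α_x) = ∑_{y: |y−x|=1} [ η(x)(α_y − η(y))(η^{x,y}(x)/α_x − η(x)/α_x) + η(y)(α_x − η(x))(η^{y,x}(x)/α_x − η(x)/α_x) ], where η^{x,y} = η − δ_x + δ_y when η(x) ≥ 1 and η(y) < α_y, and η^{x,y} = η otherwise. -/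
open Finset

def unitVec (d : ℕ) (i : Fin d) : Fin d → ℤ := fun j => if j = i then 1 else 0

def jumpConfig (d : ℕ) (α η : (Fin d → ℤ) → ℕ) (x y : Fin d → ℤ) : (Fin d → ℤ) → ℕ :=
  if 1 ≤ η x ∧ η y < α y then
    fun z => if z = x then η x - 1 else if z = y then η y + 1 else η z
  else η

lemma key (d : ℕ) (α η : (Fin d → ℤ) → ℕ) (hα : ∀ x, 1 ≤ α x) (hη : ∀ y, η y ≤ α y)
    (x y : Fin d → ℤ) (hxy : y ≠ x) :
    (α y : ℝ) * ((η y : ℝ) / (α y : ℝ) - (η x : ℝ) / (α x : ℝ))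
    = (η x : ℝ) * ((α y : ℝ) - (η y : ℝ)) *
        ((jumpConfig d α η x y x : ℝ) / (α x : ℝ) - (η x : ℝ) / (α x : ℝ))
      + (η y : ℝ) * ((α x : ℝ) - (η x : ℝ)) *
        ((jumpConfig d α η y x x : ℝ) / (α x : ℝ) - (η x : ℝ) / (α x : ℝ)) := by
  have hax : (α x : ℝ) ≠ 0 := Nat.cast_ne_zero.2 (by have := hα x; omega)
  have hay : (α y : ℝ) ≠ 0 := Nat.cast_ne_zero.2 (by have := hα y; omega)
  have h1 : (η x : ℝ) * ((α y : ℝ) - (η y : ℝ)) *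
      ((jumpConfig d α η x y x : ℝ) / (α x : ℝ) - (η x : ℝ) / (α x : ℝ))
      = -(η x : ℝ) * ((α y : ℝ) - (η y : ℝ)) / (α x : ℝ) := by
    unfold jumpConfig
    by_cases h : 1 ≤ η x ∧ η y < α y
    · rw [if_pos h]
      simp only [if_pos rfl, if_true]
      rw [Nat.cast_sub h.1]
      push_cast
      field_simp
      ring
    · rw [if_neg h]
      have : (η x : ℝ) * ((α y : ℝ) - (η y : ℝ)) = 0 := by
        have := hη y
        rcases (by omega : η x = 0 ∨ η y = α y) with h' | h' <;> simp [h']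
      rw [this]; simp [this]
  have h2 : (η y : ℝ) * ((α x : ℝ) - (η x : ℝ)) *
      ((jumpConfig d α η y x x : ℝ) / (α x : ℝ) - (η x : ℝ) / (α x : ℝ))
      = (η y : ℝ) * ((α x : ℝ) - (η x : ℝ)) / (α x : ℝ) := by
    unfold jumpConfig
    by_cases h : 1 ≤ η y ∧ η x < α x
    · rw [if_pos h]
      simp only [if_neg hxy.symm, if_pos rfl, if_true]
      push_cast
      field_simp
      ring
    · rw [if_neg h]
      have : (η y : ℝ) * ((α x : ℝ) - (η x : ℝ)) = 0 := by
        have := hη x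
        rcases (by omega : η y = 0 ∨ η x = α x) with h' | h' <;> simp [h']
      rw [this]; simp
  rw [h1, h2]
  field_simp
  ring

lemma ne_add (d : ℕ) (x : Fin d → ℤ) (i : Fin d) : x + unitVec d i ≠ x := by
  intro h
  have := congrFun h i
  simp [unitVec] at this

lemma ne_sub (d : ℕ) (x : Fin d → ℤ) (i : Fin d) : x - unitVec d i ≠ x := by
  intro h
  have := congrFun h i
  simp [unitVec] at this

/-- Duality relation `A^α D(·,η)(x) = L^α D(x,·)(η)` for `D(x,η) = η(x)/α_x`. -/
theorem duality_relation (d : ℕ) (α : (Fin d → ℤ) → ℕ) (hα : ∀ x, 1 ≤ α x)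
    (η : (Fin d → ℤ) → ℕ) (hη : ∀ y, η y ≤ α y) (x : Fin d → ℤ) :
    (∑ i : Fin d,
      ((α (x + unitVec d i) : ℝ) *
          ((η (x + unitVec d i) : ℝ) / (α (x + unitVec d i) : ℝ) - (η x : ℝ) / (α x : ℝ))
        + (α (x - unitVec d i) : ℝ) *
          ((η (x - unitVec d i) : ℝ) / (α (x - unitVec d i) : ℝ) - (η x : ℝ) / (α x : ℝ))))
    = ∑ i : Fin d,
      (((η x : ℝ) * ((α (x + unitVec d i) : ℝ) - (η (x + unitVec d i) : ℝ)) *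
          ((jumpConfig d α η x (x + unitVec d i) x : ℝ) / (α x : ℝ) - (η x : ℝ) / (α x : ℝ))
        + (η (x + unitVec d i) : ℝ) * ((α x : ℝ) - (η x : ℝ)) *
          ((jumpConfig d α η (x + unitVec d i) x x : ℝ) / (α x : ℝ) - (η x : ℝ) / (α x : ℝ)))
      + ((η x : ℝ) * ((α (x - unitVec d i) : ℝ) - (η (x - unitVec d i) : ℝ)) *
          ((jumpConfig d α η x (x - unitVec d i) x : ℝ) / (α x : ℝ) - (η x : ℝ) / (α x : ℝ))
        + (η (x - unitVec d i) : ℝ) * ((α x : ℝ) - (η x : ℝ)) *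
          ((jumpConfig d α η (x - unitVec d i) x x : ℝ) / (α x : ℝ) - (η x : ℝ) / (α x : ℝ)))) := by
  refine Finset.sum_congr rfl fun i _ => ?_
  rw [key d α η hα hη x (x + unitVec d i) (ne_add d x i),
      key d α η hα hη x (x - unitVec d i) (ne_sub d x i)]
end

section
/- (Ladder projection preserves site occupation dynamics) Let α : Z^d → N with α_x ≥ 1, and let the ladder state space consist of functions η̃ assigning to each (x,i), x ∈ Z^d, 1 ≤ i ≤ α_x, a value in {0,1}. Define the projection π(η̃)(x) = ∑_{i=1}^{α_x} η̃(x,i). Then for every bounded cylindrical function φ on partial exclusion configurations, the ladder generator applied to φ∘π satisfies L̃^α (φ ∘ π)(η̃) = (L^α φ)(π(η̃)), where L̃^α is the ladder symmetric exclusion generator with unit rates between all ladder sites over neighboring base sites, and L^α is the partial exclusion generator with rates η(x)(α_y − η(y)). -/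
open Finset

/-- Projection of a ladder configuration to a partial exclusion configuration:
`π(η̃)(x) = ∑_{i < α_x} η̃(x,i)`. -/
def ladderProj (d : ℕ) (α : (Fin d → ℤ) → ℕ) (ηt : (Fin d → ℤ) → ℕ → ℕ) :
    (Fin d → ℤ) → ℕ := fun x => ∑ i ∈ Finset.range (α x), ηt x i

/-- Moving a ladder particle from `(x,i)` to `(y,j)`. -/
def ladderMove (d : ℕ) (ηt : (Fin d → ℤ) → ℕ → ℕ) (x : Fin d → ℤ) (i : ℕ)
    (y : Fin d → ℤ) (j : ℕ) : (Fin d → ℤ) → ℕ → ℕ :=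
  fun z k => if z = x ∧ k = i then 0 else if z = y ∧ k = j then 1 else ηt z k

lemma proj_move (d : ℕ) (α : (Fin d → ℤ) → ℕ) (ηt : (Fin d → ℤ) → ℕ → ℕ)
    (hηt01 : ∀ x i, ηt x i ≤ 1)
    (x y : Fin d → ℤ) (hxy : x ≠ y) (i j : ℕ) (hi : i ∈ Finset.range (α x))
    (hj : j ∈ Finset.range (α y)) (hx1 : ηt x i = 1) (hy0 : ηt y j = 0) :
    ladderProj d α (ladderMove d ηt x i y j) = jumpConfig d α (ladderProj d α ηt) x y := by
  have hcond : 1 ≤ ladderProj d α ηt x ∧ ladderProj d α ηt y < α y := by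
    constructor
    · calc 1 = ηt x i := hx1.symm
        _ ≤ _ := Finset.single_le_sum (f := ηt x) (fun k _ => Nat.zero_le _) hi
    · calc ladderProj d α ηt y < ∑ _k ∈ Finset.range (α y), 1 :=
          Finset.sum_lt_sum (fun k _ => hηt01 y k) ⟨j, hj, by simp [hy0]⟩
        _ = α y := by simp
  rw [jumpConfig, if_pos hcond]
  funext z
  by_cases hzx : z = x
  · subst hzx
    simp only [if_pos rfl]
    have : ∀ k, ladderMove d ηt z i y j z k = if k = i then 0 else ηt z k := by
      intro k
      simp only [ladderMove]
      by_cases hk : k = i <;> simp [hk, hxy]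
    simp only [ladderProj, this]
    rw [← Finset.sum_erase_add _ _ hi, if_pos rfl, add_zero,
      ← Finset.sum_erase_add _ (ηt z) hi, hx1, Nat.add_sub_cancel]
    exact Finset.sum_congr rfl fun k hk => by
      rw [if_neg (Finset.ne_of_mem_erase hk)]
  · rw [if_neg hzx]
    by_cases hzy : z = y
    · subst hzy
      rw [if_pos rfl]
      have : ∀ k, ladderMove d ηt x i z j z k = if k = j then 1 else ηt z k := by
        intro k
        simp only [ladderMove]
        by_cases hk : k = j <;> simp [hk, hzx]
      simp only [ladderProj, this]
      rw [← Finset.sum_erase_add _ _ hj, if_pos rfl,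
        ← Finset.sum_erase_add _ (ηt z) hj, hy0, add_zero]
      congr 1
      exact Finset.sum_congr rfl fun k hk => by
        rw [if_neg (Finset.ne_of_mem_erase hk)]
    · rw [if_neg hzy]
      simp only [ladderProj, ladderMove]
      exact Finset.sum_congr rfl fun k _ => by simp [hzx, hzy]

lemma key_s15 (d : ℕ) (α : (Fin d → ℤ) → ℕ) (ηt : (Fin d → ℤ) → ℕ → ℕ)
    (hηt01 : ∀ x i, ηt x i ≤ 1) (φ : ((Fin d → ℤ) → ℕ) → ℝ)
    (x y : Fin d → ℤ) (hxy : x ≠ y) :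
    ∑ i ∈ Finset.range (α x), ∑ j ∈ Finset.range (α y),
        (ηt x i : ℝ) * (1 - (ηt y j : ℝ)) *
          (φ (ladderProj d α (ladderMove d ηt x i y j)) - φ (ladderProj d α ηt))
      = (ladderProj d α ηt x : ℝ) * ((α y : ℝ) - (ladderProj d α ηt y : ℝ)) *
          (φ (jumpConfig d α (ladderProj d α ηt) x y) - φ (ladderProj d α ηt)) := by
  set C : ℝ := φ (jumpConfig d α (ladderProj d α ηt) x y) - φ (ladderProj d α ηt) with hC
  have step : ∀ i ∈ Finset.range (α x), ∀ j ∈ Finset.range (α y),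
      (ηt x i : ℝ) * (1 - (ηt y j : ℝ)) *
          (φ (ladderProj d α (ladderMove d ηt x i y j)) - φ (ladderProj d α ηt))
        = (ηt x i : ℝ) * (1 - (ηt y j : ℝ)) * C := by
    intro i hi j hj
    rcases Nat.eq_zero_or_pos (ηt x i) with h0 | h1
    · simp [h0]
    · have hx1 : ηt x i = 1 := le_antisymm (hηt01 x i) h1
      rcases Nat.eq_zero_or_pos (ηt y j) with hy0 | hy1
      · rw [proj_move d α ηt hηt01 x y hxy i j hi hj hx1 hy0]
      · have : ηt y j = 1 := le_antisymm (hηt01 y j) hy1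
        simp [this]
  calc ∑ i ∈ Finset.range (α x), ∑ j ∈ Finset.range (α y),
        (ηt x i : ℝ) * (1 - (ηt y j : ℝ)) *
          (φ (ladderProj d α (ladderMove d ηt x i y j)) - φ (ladderProj d α ηt))
      = ∑ i ∈ Finset.range (α x), ∑ j ∈ Finset.range (α y),
        (ηt x i : ℝ) * (1 - (ηt y j : ℝ)) * C :=
        Finset.sum_congr rfl fun i hi => Finset.sum_congr rfl fun j hj => step i hi j hj
    _ = (∑ i ∈ Finset.range (α x), (ηt x i : ℝ)) *
          (∑ j ∈ Finset.range (α y), (1 - (ηt y j : ℝ))) * C := by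
        rw [Finset.sum_mul, Finset.sum_mul]
        refine Finset.sum_congr rfl fun i _ => ?_
        rw [Finset.mul_sum, Finset.sum_mul]
    _ = (ladderProj d α ηt x : ℝ) * ((α y : ℝ) - (ladderProj d α ηt y : ℝ)) * C := by
        congr 1
        congr 1
        · simp [ladderProj]
        · rw [Finset.sum_sub_distrib]
          simp [ladderProj]

/-- The ladder projection intertwines the ladder symmetric exclusion generator with the
partial exclusion generator: `L̃^α (φ ∘ π)(η̃) = (L^α φ)(π(η̃))`. -/
theorem ladder_projection_generator
    (d : ℕ) (hd : 0 < d) (α : (Fin d → ℤ) → ℕ) (hα : ∀ x, 1 ≤ α x)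
    (ηt : (Fin d → ℤ) → ℕ → ℕ) (hηt01 : ∀ x i, ηt x i ≤ 1)
    (hηtsupp : ∀ x i, α x ≤ i → ηt x i = 0)
    (φ : ((Fin d → ℤ) → ℕ) → ℝ)
    (hφbdd : ∃ M : ℝ, ∀ η, |φ η| ≤ M)
    (hφcyl : ∃ S : Finset (Fin d → ℤ), ∀ η η' : (Fin d → ℤ) → ℕ,
      (∀ x ∈ S, η x = η' x) → φ η = φ η') :
    (∑' x : Fin d → ℤ, ∑ i : Fin d,
      ∑ i' ∈ Finset.range (α x), ∑ j ∈ Finset.range (α (x + unitVec d i)),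
        ((ηt x i' : ℝ) * (1 - (ηt (x + unitVec d i) j : ℝ)) *
            (φ (ladderProj d α (ladderMove d ηt x i' (x + unitVec d i) j))
              - φ (ladderProj d α ηt))
          + (ηt (x + unitVec d i) j : ℝ) * (1 - (ηt x i' : ℝ)) *
            (φ (ladderProj d α (ladderMove d ηt (x + unitVec d i) j x i'))
              - φ (ladderProj d α ηt))))
    = ∑' x : Fin d → ℤ, ∑ i : Fin d,
        ((ladderProj d α ηt x : ℝ) *
            ((α (x + unitVec d i) : ℝ) - (ladderProj d α ηt (x + unitVec d i) : ℝ)) *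
            (φ (jumpConfig d α (ladderProj d α ηt) x (x + unitVec d i))
              - φ (ladderProj d α ηt))
          + (ladderProj d α ηt (x + unitVec d i) : ℝ) *
            ((α x : ℝ) - (ladderProj d α ηt x : ℝ)) *
            (φ (jumpConfig d α (ladderProj d α ηt) (x + unitVec d i) x)
              - φ (ladderProj d α ηt))) := by
  refine tsum_congr fun x => Finset.sum_congr rfl fun i _ => ?_
  set y := x + unitVec d i with hy
  have hxy : x ≠ y := by
    intro h
    have := congrFun h i
    simp [hy, unitVec] at this
  simp only [Finset.sum_add_distrib]
  rw [key_s15 d α ηt hηt01 φ x y hxy]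
  congr 1
  rw [Finset.sum_comm]
  exact key_s15 d α ηt hηt01 φ y x hxy.symm
end
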